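/- For every positive integer n, the polynomial q_n(t) = ∑_{i=0}^{⌊n/2⌋} C(n-i, i) t^i has only real roots. -/

import Mathlib

open Finset Polynomial

/-- The Fibonacci-type polynomial `q_n(t) = ∑_{i=0}^{⌊n/2⌋} C(n-i, i) t^i`, over `ℝ`. -/
noncomputable def fibPolyR (n : ℕ) : Polynomial ℝ :=
  ∑ i ∈ Finset.range (n / 2 + 1), C (((n - i).choose i : ℕ) : ℝ) * X ^ i

/-- Complex evaluation as a full-range sum. -/
noncomputable def Sfib (n : ℕ) (z : ℂ) : ℂ :=
  ∑ i ∈ Finset.range (n + 1), (((n - i).choose i : ℕ) : ℂ) * z ^ i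

lemma aeval_fibPolyR (n : ℕ) (z : ℂ) : Polynomial.aeval z (fibPolyR n) = Sfib n z := by
  unfold fibPolyR Sfib
  rw [map_sum]
  simp only [map_mul, map_pow, aeval_C, aeval_X, Complex.coe_algebraMap]
  push_cast
  apply Finset.sum_subset (Finset.range_subset_range.2 (by omega : n / 2 + 1 ≤ n + 1))
  intro i hi hni
  simp only [Finset.mem_range] at hi hni
  have h : (n - i).choose i = 0 := Nat.choose_eq_zero_of_lt (by omega)
  simp [h]

lemma Sfib_rec (n : ℕ) (z : ℂ) : Sfib (n + 2) z = Sfib (n + 1) z + z * Sfib n z := by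
  unfold Sfib
  have hL : ∑ i ∈ Finset.range (n + 2 + 1), (((n + 2 - i).choose i : ℕ) : ℂ) * z ^ i
      = (∑ i ∈ Finset.range (n + 2), (((n + 2 - (i + 1)).choose (i + 1) : ℕ) : ℂ) * z ^ (i + 1))
        + 1 := by
    rw [Finset.sum_range_succ' (fun i => (((n + 2 - i).choose i : ℕ) : ℂ) * z ^ i) (n + 2)]
    norm_num
  have hM : ∑ i ∈ Finset.range (n + 1 + 1), (((n + 1 - i).choose i : ℕ) : ℂ) * z ^ i
      = (∑ i ∈ Finset.range (n + 1), (((n + 1 - (i + 1)).choose (i + 1) : ℕ) : ℂ) * z ^ (i + 1))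
        + 1 := by
    rw [Finset.sum_range_succ' (fun i => (((n + 1 - i).choose i : ℕ) : ℂ) * z ^ i) (n + 1)]
    norm_num
  rw [hL, hM]
  have hz : z * ∑ i ∈ Finset.range (n + 1), (((n - i).choose i : ℕ) : ℂ) * z ^ i
      = ∑ i ∈ Finset.range (n + 2), (((n - i).choose i : ℕ) : ℂ) * z ^ (i + 1) := by
    have h0 : (n - (n + 1)).choose (n + 1) = 0 := by
      have h : n - (n + 1) = 0 := by omega
      rw [h]; exact Nat.choose_eq_zero_of_lt (by omega)
    rw [Finset.mul_sum,
      Finset.sum_range_succ (fun i => (((n - i).choose i : ℕ) : ℂ) * z ^ (i + 1)) (n + 1)]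
    simp only [h0, Nat.cast_zero, zero_mul, add_zero]
    apply Finset.sum_congr rfl
    intro i _
    ring
  rw [hz]
  clear hz
  have hkey : ∀ i ∈ Finset.range (n + 2),
      (((n + 2 - (i + 1)).choose (i + 1) : ℕ) : ℂ) * z ^ (i + 1)
      = (((n + 1 - (i + 1)).choose (i + 1) : ℕ) : ℂ) * z ^ (i + 1)
        + (((n - i).choose i : ℕ) : ℂ) * z ^ (i + 1) := by
    intro i hi
    simp only [Finset.mem_range] at hi
    rcases Nat.lt_or_ge i (n + 1) with h | h
    · have h1 : n + 2 - (i + 1) = (n - i) + 1 := by omega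
      have h2 : n + 1 - (i + 1) = n - i := by omega
      rw [h1, h2, Nat.choose_succ_succ, Nat.cast_add]
      ring
    · have hi' : i = n + 1 := by omega
      subst hi'
      have e1 : n + 2 - (n + 1 + 1) = 0 := by omega
      have e2 : n + 1 - (n + 1 + 1) = 0 := by omega
      have e3 : n - (n + 1) = 0 := by omega
      rw [e1, e2, e3]
      simp [Nat.choose_eq_zero_of_lt]
  rw [Finset.sum_congr rfl hkey, Finset.sum_add_distrib]
  have hext : ∑ i ∈ Finset.range (n + 2), (((n + 1 - (i + 1)).choose (i + 1) : ℕ) : ℂ) * z ^ (i + 1)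
      = ∑ i ∈ Finset.range (n + 1), (((n + 1 - (i + 1)).choose (i + 1) : ℕ) : ℂ) * z ^ (i + 1) := by
    have h0 : (n + 1 - (n + 1 + 1)).choose (n + 1 + 1) = 0 := by
      have h : n + 1 - (n + 1 + 1) = 0 := by omega
      rw [h]; exact Nat.choose_eq_zero_of_lt (by omega)
    rw [Finset.sum_range_succ
      (fun i => (((n + 1 - (i + 1)).choose (i + 1) : ℕ) : ℂ) * z ^ (i + 1)) (n + 1)]
    simp only [h0, Nat.cast_zero, zero_mul, add_zero]
  rw [hext]
  ring

lemma Sfib_closed (n : ℕ) : ∀ u v : ℂ, u + v = 1 →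
    (u - v) * Sfib n (-(u * v)) = u ^ (n + 1) - v ^ (n + 1) := by
  induction n using Nat.twoStepInduction with
  | zero =>
    intro u v huv
    simp [Sfib]
  | one =>
    intro u v huv
    have h : Sfib 1 (-(u * v)) = 1 := by
      simp [Sfib, Finset.sum_range_succ]
    rw [h]
    linear_combination (v - u) * huv
  | more n ih1 ih2 =>
    intro u v huv
    have h1 := ih1 u v huv
    have h2 := ih2 u v huv
    rw [Sfib_rec]
    linear_combination h2 - (u * v) * h1 - (u ^ (n + 2) - v ^ (n + 2)) * huv

/-- `q_n` has only real roots: every complex root is real. -/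
theorem stmt_5 (n : ℕ) (hn : 0 < n) :
    ∀ z : ℂ, Polynomial.aeval z (fibPolyR n) = 0 → z.im = 0 := by
  intro z hz
  rw [aeval_fibPolyR] at hz
  obtain ⟨w, hw⟩ : ∃ w : ℂ, w ^ 2 = 1 + 4 * z :=
    ⟨(1 + 4 * z) ^ ((2 : ℕ) : ℂ)⁻¹, Complex.cpow_nat_inv_pow _ (by norm_num)⟩
  set u : ℂ := (1 + w) / 2 with hu
  set v : ℂ := (1 - w) / 2 with hv
  have huv : u + v = 1 := by rw [hu, hv]; ring
  have hprod : u * v = -z := by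
    rw [hu, hv]
    linear_combination (-1/4 : ℂ) * hw
  have hz' : -(u * v) = z := by rw [hprod]; ring
  have hclosed := Sfib_closed n u v huv
  rw [hz', hz, mul_zero] at hclosed
  have hpow : u ^ (n + 1) = v ^ (n + 1) := by linear_combination -hclosed
  by_cases hw0 : w = 0
  · have hz4 : z = -(1/4 : ℂ) := by
      rw [hw0] at hw
      linear_combination (-(1/4) : ℂ) * hw
    rw [hz4]
    simp
  · by_cases hu0 : u = 0
    · have : z = 0 := by rw [← hz', hu0]; ring
      rw [this]; rfl
    by_cases hv0 : v = 0
    · have : z = 0 := by rw [← hz', hv0]; ring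
      rw [this]; rfl
    -- |u| = |v|
    have habs : ‖u‖ = ‖v‖ := by
      have h := congrArg norm hpow
      rw [norm_pow, norm_pow] at h
      exact (pow_left_inj₀ (by positivity) (by positivity) (by omega)).mp h
    have hns : Complex.normSq u = Complex.normSq v := by
      rw [← Complex.sq_norm, ← Complex.sq_norm, habs]
    have hvre : v.re = 1 - u.re := by
      have := congrArg Complex.re huv
      simp [Complex.add_re] at this
      linarith
    have hvim : v.im = -u.im := by
      have := congrArg Complex.im huv
      simp [Complex.add_im] at this
      linarith
    have hre : u.re = 1 / 2 := by
      rw [Complex.normSq_apply, Complex.normSq_apply, hvre, hvim] at hns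
      nlinarith [hns]
    have : z.im = -(u * v).im := by rw [← hz']; simp
    rw [this, Complex.mul_im, hvre, hvim, hre]
    ring
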